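/- Let L be a rank r geometric lattice with complete flag and coatom partition A_0, …, A_{r−1} as above, and let S_G be the simplicial complex associated to G ∈ L. Then the geometric realization of S_G is homotopy equivalent to the sphere S^{corank(G)−1}, where corank(G) = r − rank(G). In particular S_{0̂} ≃ S^{r−1}. -/

import Mathlib

/-- A geometric lattice: a finite ranked lattice in which every element is a
join of atoms and the rank function is semimodular. -/
structure IsGeometricLattice (L : Type*) [Lattice L] [BoundedOrder L] [Finite L]
    (rk : L → ℕ) : Prop where
  rank_bot : rk ⊥ = 0
  rank_strictMono : StrictMono rk
  rank_covBy : ∀ x y : L, x ⋖ y → rk y = rk x + 1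
  atomistic : ∀ x : L, ∃ s : Finset L, (∀ a ∈ s, IsAtom a) ∧ x = s.sup id
  semimodular : ∀ x y : L, rk (x ⊓ y) + rk (x ⊔ y) ≤ rk x + rk y

/-- The set of coatoms of `L` lying above `X`. -/
def coatomsAbove {L : Type*} [Lattice L] [BoundedOrder L] (X : L) : Set L :=
  {C | IsCoatom C ∧ X ≤ C}

/-- A complete flag `⊥ = F 0 ⋖ F 1 ⋖ ⋯ ⋖ F r = ⊤` (a maximal chain) in a
rank `r` lattice, recorded as a sequence of covers. -/
def IsCompleteFlag {L : Type*} [Lattice L] [BoundedOrder L] {r : ℕ}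
    (F : Fin (r + 1) → L) : Prop :=
  F 0 = ⊥ ∧ F (Fin.last r) = ⊤ ∧ ∀ i : Fin r, F i.castSucc ⋖ F i.succ

/-- The maximal face of `S_G` with sign pattern `ε`: for each `i`, it contains
the vertices `(H, ε i)` for the coatoms `H ≥ G` lying in the part `A i`. -/
def flagMaxFace {L : Type*} [Lattice L] [BoundedOrder L] {r : ℕ}
    (A : Fin r → Set L) (G : L) (ε : Fin r → Bool) : Set (L × Bool) :=
  {p | ∃ i : Fin r, p.1 ∈ coatomsAbove G ∩ A i ∧ p.2 = ε i}

/-- The simplicial complex `S_G`: its faces are the subsets of the maximal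
faces `flagMaxFace A G ε`, `ε ∈ {+,-}^r`. -/
def flagComplex {L : Type*} [Lattice L] [BoundedOrder L] {r : ℕ}
    (A : Fin r → Set L) (G : L) : Set (Set (L × Bool)) :=
  {σ | ∃ ε : Fin r → Bool, σ ⊆ flagMaxFace A G ε}

/-- The geometric realization of an abstract simplicial complex `K` on a finite
vertex set `W`, inside `ℝ^W`. -/
def realization {W : Type*} [Fintype W] (K : Set (Set W)) : Set (W → ℝ) :=
  {x | (∀ w, 0 ≤ x w) ∧ (∑ w, x w) = 1 ∧ ∃ σ ∈ K, {w | x w ≠ 0} ⊆ σ}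

/-- The unit sphere `S^{n-1} ⊆ ℝ^n` (empty for `n = 0`). -/
def stdSphere (n : ℕ) : Set (EuclideanSpace ℝ (Fin n)) :=
  Metric.sphere (0 : EuclideanSpace ℝ (Fin n)) 1

lemma covBy_of_rank {L : Type*} [Lattice L] [BoundedOrder L] {rk : L → ℕ}
    (hmono : StrictMono rk) {x z : L} (hlt : x < z) (hrz : rk z = rk x + 1) : x ⋖ z :=
  ⟨hlt, fun c h1 h2 => by have := hmono h1; have := hmono h2; omega⟩


lemma exists_coatom_not_le {L : Type*} [Lattice L] [BoundedOrder L] [Finite L] {rk : L → ℕ}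
    (hL : IsGeometricLattice L rk) {x z : L} (hxz : x ⋖ z) :
    ∃ H : L, IsCoatom H ∧ x ≤ H ∧ ¬ z ≤ H := by
  classical
  set P : Set L := {m | x ≤ m ∧ ¬ z ≤ m} with hP
  have hxP : x ∈ P := ⟨le_refl x, fun h => absurd h hxz.lt.not_ge⟩
  obtain ⟨m, hmP, hmax⟩ : ∃ m ∈ P, ∀ m' ∈ P, id m ≤ id m' → id m = id m' := by
    obtain ⟨m, hm⟩ := Set.Finite.exists_maximalFor id P (Set.toFinite P) ⟨x, hxP⟩
    exact ⟨m, hm.1, fun m' hm' h => le_antisymm h (hm.2 hm' h)⟩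
  simp only [id] at hmax
  obtain ⟨hxm, hzm⟩ := hmP
  -- z ⊓ m = x
  have hzmx : z ⊓ m = x := by
    rcases lt_or_eq_of_le (le_inf hxz.lt.le hxm : x ≤ z ⊓ m) with h | h
    · refine absurd (lt_of_le_of_ne inf_le_left (fun he => hzm ?_)) (hxz.2 h)
      rw [← he]; exact inf_le_right
    · exact h.symm
  -- m ⊔ z = ⊤
  have hmz_top : m ⊔ z = ⊤ := by
    by_contra htop
    have hlt : m ⊔ z < ⊤ := lt_of_le_of_ne le_top htop
    -- find an atom not below m ⊔ z
    obtain ⟨s, hs, hsup⟩ := hL.atomistic ⊤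
    have : ∃ a ∈ s, ¬ a ≤ m ⊔ z := by
      by_contra hall
      push_neg at hall
      have : (⊤ : L) ≤ m ⊔ z := by
        rw [hsup]; exact Finset.sup_le fun a ha => hall a ha
      exact absurd this hlt.not_ge
    obtain ⟨a, has, hale⟩ := this
    have hatom := hs a has
    have ham : ¬ a ≤ m := fun h => hale (h.trans le_sup_left)
    have hrka : rk a = 1 := by
      rw [hL.rank_covBy ⊥ a hatom.bot_covBy, hL.rank_bot]
    -- rk (m ⊔ a) ≤ rk m + 1
    have hsemi := hL.semimodular m a
    rw [hrka] at hsemi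
    have hma : rk (m ⊔ a) ≤ rk m + 1 := by omega
    -- ¬ z ≤ m ⊔ a
    have hzma : ¬ z ≤ m ⊔ a := by
      intro hz
      have h1 : m ⊔ z ≤ m ⊔ a := sup_le le_sup_left hz
      have h2 : m < m ⊔ z := lt_of_le_of_ne le_sup_left (fun he => hzm (by rw [he]; exact le_sup_right))
      have h3 : rk m < rk (m ⊔ z) := hL.rank_strictMono h2
      have h4 : rk (m ⊔ z) ≤ rk (m ⊔ a) := hL.rank_strictMono.monotone h1
      have h5 : m ⊔ z = m ⊔ a := by
        rcases lt_or_eq_of_le h1 with h | h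
        · exact absurd (hL.rank_strictMono h) (by omega)
        · exact h
      exact hale (by rw [h5]; exact le_sup_right)
    have hmm : m ⊔ a ∈ P := ⟨hxm.trans le_sup_left, hzma⟩
    have := hmax _ hmm le_sup_left
    exact ham (by rw [this]; exact le_sup_right)
  -- m is a coatom
  have hsemi := hL.semimodular m z
  rw [inf_comm z m] at hzmx
  rw [hzmx, hmz_top, hL.rank_covBy x z hxz] at hsemi
  have hmtop : m < ⊤ := lt_of_le_of_ne le_top (fun he => hzm (by rw [he]; exact le_top))
  have h6 : rk m < rk ⊤ := hL.rank_strictMono hmtop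
  have h7 : rk ⊤ = rk m + 1 := by omega
  have hco : m ⋖ ⊤ := covBy_of_rank hL.rank_strictMono hmtop h7
  exact ⟨m, ⟨hmtop.ne, fun b hb => by by_contra hne; exact hco.2 hb (lt_of_le_of_ne le_top hne)⟩, hxm, hzm⟩

lemma flag_block_disj {L : Type*} [Lattice L] [BoundedOrder L] {r : ℕ}
    (F : Fin (r + 1) → L) (hF : IsCompleteFlag F)
    (A : Fin r → Set L)
    (hA : ∀ i : Fin r, A i = coatomsAbove (F i.castSucc) \ coatomsAbove (F i.succ))
    (G : L) :
    ∀ (i j : Fin r) (H : L), H ∈ coatomsAbove G ∩ A i → H ∈ coatomsAbove G ∩ A j → i = j := by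
  have hFmono : StrictMono F := Fin.strictMono_iff_lt_succ.mpr fun i => (hF.2.2 i).lt
  have main : ∀ (i j : Fin r) (H : L), i < j →
      H ∈ coatomsAbove G ∩ A i → H ∈ coatomsAbove G ∩ A j → False := by
    intro i j H hij hi hj
    rw [hA i] at hi
    rw [hA j] at hj
    obtain ⟨-, ⟨⟨hco, -⟩, hnot⟩⟩ := hi
    obtain ⟨-, ⟨⟨-, hle⟩, -⟩⟩ := hj
    refine hnot ⟨hco, le_trans (hFmono.monotone ?_) hle⟩
    rw [Fin.le_def, Fin.val_succ, Fin.coe_castSucc]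
    rw [Fin.lt_def] at hij
    omega
  intro i j H hi hj
  rcases lt_trichotomy i j with h | h | h
  · exact absurd (main i j H h hi hj) (fun x => x)
  · exact h
  · exact absurd (main j i H h hj hi) (fun x => x)


lemma flag_block_count {L : Type*} [Lattice L] [BoundedOrder L] [Finite L]
    {rk : L → ℕ} (hL : IsGeometricLattice L rk) {r : ℕ} (hr : rk ⊤ = r)
    (F : Fin (r + 1) → L) (hF : IsCompleteFlag F)
    (A : Fin r → Set L)
    (hA : ∀ i : Fin r, A i = coatomsAbove (F i.castSucc) \ coatomsAbove (F i.succ))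
    (G : L) :
    Nat.card {i : Fin r // (coatomsAbove G ∩ A i).Nonempty} = r - rk G := by
  classical
  obtain ⟨hF0, hFr, hcov⟩ := hF
  have hFmono : StrictMono F := Fin.strictMono_iff_lt_succ.mpr fun i => (hcov i).lt
  have hrkF : ∀ i : Fin (r+1), rk (F i) = i := by
    intro i
    induction i using Fin.induction with
    | zero => simpa [hF0] using hL.rank_bot
    | succ i ih =>
      rw [hL.rank_covBy _ _ (hcov i), ih]
      simp
  have hcs : ∀ i : Fin r, F i.castSucc ≤ F i.succ := fun i => (hcov i).lt.le
  have hsup : ∀ i : Fin r, (G ⊔ F i.castSucc) ⊔ F i.succ = G ⊔ F i.succ := by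
    intro i; rw [sup_assoc, sup_eq_right.mpr (hcs i)]
  have hle : ∀ i : Fin r, rk (G ⊔ F i.succ) ≤ rk (G ⊔ F i.castSucc) + 1 := by
    intro i
    have h := hL.semimodular (G ⊔ F i.castSucc) (F i.succ)
    rw [hsup i] at h
    have h2 : rk (F i.castSucc) ≤ rk ((G ⊔ F i.castSucc) ⊓ F i.succ) :=
      hL.rank_strictMono.monotone (le_inf le_sup_right (hcs i))
    have h3 : rk (F i.succ) = (i : ℕ) + 1 := by rw [hrkF]; simp
    have h4 : rk (F i.castSucc) = (i : ℕ) := by rw [hrkF]; simp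
    omega
  have hne_iff : ∀ i : Fin r,
      (coatomsAbove G ∩ A i).Nonempty ↔ ¬ F i.succ ≤ G ⊔ F i.castSucc := by
    intro i
    constructor
    · rintro ⟨H, ⟨⟨hco, hGH⟩, hHA⟩⟩ hcontra
      rw [hA i] at hHA
      obtain ⟨⟨-, hcle⟩, hnot⟩ := hHA
      exact hnot ⟨hco, hcontra.trans (sup_le hGH hcle)⟩
    · intro hstep
      have hlt : G ⊔ F i.castSucc < G ⊔ F i.succ := by
        refine lt_of_le_of_ne (sup_le_sup_left (hcs i) G) (fun he => hstep ?_)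
        rw [he]; exact le_sup_right
      have heq : rk (G ⊔ F i.succ) = rk (G ⊔ F i.castSucc) + 1 := by
        have := hL.rank_strictMono hlt
        have := hle i
        omega
      obtain ⟨H, hco, hxH, hzH⟩ :=
        exists_coatom_not_le hL (covBy_of_rank hL.rank_strictMono hlt heq)
      refine ⟨H, ⟨⟨hco, le_trans le_sup_left hxH⟩, ?_⟩⟩
      rw [hA i]
      refine ⟨⟨hco, le_trans le_sup_right hxH⟩, fun hmem => ?_⟩
      exact hzH (sup_le (le_trans le_sup_left hxH) hmem.2)
  -- telescoping count
  have hrle : rk G ≤ r := by rw [← hr]; exact hL.rank_strictMono.monotone le_top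
  set gZ : ℕ → ℤ := fun n => (rk (G ⊔ F ⟨min n r, by omega⟩) : ℤ) with hgZ
  have key : ∀ i : Fin r,
      (if (coatomsAbove G ∩ A i).Nonempty then (1:ℤ) else 0) = gZ ((i:ℕ)+1) - gZ i := by
    intro i
    have e1 : (⟨min ((i:ℕ)+1) r, by omega⟩ : Fin (r+1)) = i.succ := by
      have : (i:ℕ) + 1 ≤ r := i.isLt
      apply Fin.ext; simp [this]
    have e2 : (⟨min (i:ℕ) r, by omega⟩ : Fin (r+1)) = i.castSucc := by
      apply Fin.ext; simp [le_of_lt i.isLt]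
    rw [hgZ]
    simp only [e1, e2]
    split_ifs with h
    · have := (hne_iff i).mp h
      have hlt : G ⊔ F i.castSucc < G ⊔ F i.succ := by
        refine lt_of_le_of_ne (sup_le_sup_left (hcs i) G) (fun he => this ?_)
        rw [he]; exact le_sup_right
      have h1 := hL.rank_strictMono hlt
      have h2 := hle i
      omega
    · have hstep : F i.succ ≤ G ⊔ F i.castSucc := not_not.mp (fun hn => h ((hne_iff i).mpr hn))
      have : G ⊔ F i.succ = G ⊔ F i.castSucc :=
        le_antisymm (sup_le le_sup_left hstep) (sup_le_sup_left (hcs i) G)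
      rw [this]; ring
  have hcard1 : Nat.card {i : Fin r // (coatomsAbove G ∩ A i).Nonempty}
      = (Finset.univ.filter fun i : Fin r => (coatomsAbove G ∩ A i).Nonempty).card := by
    rw [Nat.card_eq_fintype_card, Fintype.card_subtype]
  have hZ : ((Finset.univ.filter fun i : Fin r => (coatomsAbove G ∩ A i).Nonempty).card : ℤ)
      = (r : ℤ) - rk G := by
    rw [Finset.card_filter]
    push_cast
    calc (∑ i : Fin r, if (coatomsAbove G ∩ A i).Nonempty then (1:ℤ) else 0)
        = ∑ i : Fin r, (gZ ((i:ℕ)+1) - gZ (i:ℕ)) := by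
          exact Finset.sum_congr rfl fun i _ => key i
      _ = ∑ n ∈ Finset.range r, (gZ (n+1) - gZ n) :=
          Fin.sum_univ_eq_sum_range (fun n => gZ (n+1) - gZ n) r
      _ = gZ r - gZ 0 := Finset.sum_range_sub gZ r
      _ = (r : ℤ) - rk G := by
          have e1 : (⟨min r r, by omega⟩ : Fin (r+1)) = Fin.last r := by
            apply Fin.ext; simp
          have e2 : (⟨min 0 r, by omega⟩ : Fin (r+1)) = 0 := by
            apply Fin.ext; simp
          rw [hgZ]
          simp only [e1, e2, hFr, hF0, sup_top_eq, sup_bot_eq, hr]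
  rw [hcard1]
  omega

theorem top_main {L : Type*} [Fintype L] {r k : ℕ} (C : Fin r → Set L)
    (hdisj : ∀ (i j : Fin r) (H : L), H ∈ C i → H ∈ C j → i = j)
    (hcard : Nat.card {i : Fin r // (C i).Nonempty} = k) :
    Nonempty (ContinuousMap.HomotopyEquiv
      (realization {σ : Set (L × Bool) | ∃ ε : Fin r → Bool,
        σ ⊆ {p : L × Bool | ∃ i, p.1 ∈ C i ∧ p.2 = ε i}})
      (stdSphere k)) := by
  classical
  set MF : (Fin r → Bool) → Set (L × Bool) :=
    fun ε => {p : L × Bool | ∃ i, p.1 ∈ C i ∧ p.2 = ε i} with hMF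
  set X : Set ((L × Bool) → ℝ) := realization {σ | ∃ ε : Fin r → Bool, σ ⊆ MF ε} with hX
  -- index equiv
  have hcard' : Fintype.card {i : Fin r // (C i).Nonempty} = k := by
    rw [← Nat.card_eq_fintype_card]; exact hcard
  set e : Fin k ≃ {i : Fin r // (C i).Nonempty} := (Fintype.equivFinOfCardEq hcard').symm with he
  set Hc : {i : Fin r // (C i).Nonempty} → L := fun i => i.2.choose with hHcdef
  have hHc : ∀ i, Hc i ∈ C i.1 := fun i => i.2.choose_spec
  have hHcinj : ∀ j j' : Fin k, Hc (e j) = Hc (e j') → j = j' := by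
    intro j j' h
    have h2 : (e j).1 = (e j').1 := hdisj _ _ (Hc (e j)) (hHc _) (h ▸ hHc (e j'))
    exact e.injective (Subtype.ext h2)
  set B : Fin r → Finset L := fun i => (C i).toFinset with hBdef
  have hBmem : ∀ (i : Fin r) (H : L), H ∈ B i ↔ H ∈ C i := fun i H => Set.mem_toFinset
  set q : ((L × Bool) → ℝ) → (Fin k → ℝ) :=
    fun x j => ∑ H ∈ B (e j).1, (x (H, true) - x (H, false)) with hq
  set sM : (Fin k → ℝ) → ((L × Bool) → ℝ) := fun t p =>
    ∑ j : Fin k, if p.1 = Hc (e j) then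
      (if p.2 = true then max (t j) 0 else max (-(t j)) 0) else 0 with hsM
  set εt : (Fin k → ℝ) → (Fin r → Bool) := fun t i =>
    if h : (C i).Nonempty then decide (0 ≤ t (e.symm ⟨i, h⟩)) else true with hεt
  -- real arithmetic helpers
  have habs : ∀ a : ℝ, max a 0 + max (-a) 0 = |a| := by
    intro a
    rcases le_total a 0 with h | h
    · rw [max_eq_right h, max_eq_left (by linarith), abs_of_nonpos h]; ring
    · rw [max_eq_left h, max_eq_right (by linarith), abs_of_nonneg h]; ring
  have hdiffmax : ∀ a : ℝ, max a 0 - max (-a) 0 = a := by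
    intro a
    rcases le_total a 0 with h | h
    · rw [max_eq_right h, max_eq_left (by linarith)]; ring
    · rw [max_eq_left h, max_eq_right (by linarith)]; ring
  -- membership helpers
  have hXmem : ∀ y : (L × Bool) → ℝ, (∀ p, 0 ≤ y p) → (∑ p, y p) = 1 →
      (∃ ε, ∀ p, y p ≠ 0 → p ∈ MF ε) → y ∈ X := by
    rintro y h1 h2 ⟨ε, h3⟩
    exact ⟨h1, h2, MF ε, ⟨ε, subset_rfl⟩, fun p hp => h3 p hp⟩
  have hXelim : ∀ y ∈ X, (∀ p, 0 ≤ y p) ∧ (∑ p, y p) = 1 ∧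
      (∃ ε, ∀ p, y p ≠ 0 → p ∈ MF ε) := by
    rintro y ⟨h1, h2, σ, ⟨ε, hσ⟩, hsub⟩
    exact ⟨h1, h2, ε, fun p hp => hσ (hsub hp)⟩
  have hvanish : ∀ (y : (L × Bool) → ℝ) (ε : Fin r → Bool),
      (∀ p, y p ≠ 0 → p ∈ MF ε) → ∀ (i : Fin r) (H : L) (b : Bool),
      H ∈ C i → b ≠ ε i → y (H, b) = 0 := by
    intro y ε hs i H b hH hb
    by_contra h0
    obtain ⟨i', hH', hb'⟩ := hs _ h0
    rw [hdisj i' i H hH' hH] at hb'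
    exact hb hb'
  -- q values under a sign pattern
  have hqval : ∀ (y : (L × Bool) → ℝ) (ε : Fin r → Bool), (∀ p, 0 ≤ y p) →
      (∀ p, y p ≠ 0 → p ∈ MF ε) → ∀ j : Fin k,
      (|q y j| = ∑ H ∈ B (e j).1, (y (H, true) + y (H, false))) ∧
      (q y j ≠ 0 → ε (e j).1 = decide (0 ≤ q y j)) := by
    intro y ε h1 h2 j
    cases hε : ε (e j).1 with
    | true =>
      have hz : ∀ H ∈ B (e j).1, y (H, false) = 0 := fun H hH =>
        hvanish y ε h2 (e j).1 H false ((hBmem _ _).mp hH) (by rw [hε]; simp)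
      have hval : q y j = ∑ H ∈ B (e j).1, y (H, true) := by
        simp only [hq]
        exact Finset.sum_congr rfl fun H hH => by rw [hz H hH]; ring
      have hnn : 0 ≤ q y j := by
        rw [hval]; exact Finset.sum_nonneg fun H _ => h1 _
      constructor
      · rw [abs_of_nonneg hnn, hval]
        exact Finset.sum_congr rfl fun H hH => by rw [hz H hH]; ring
      · intro h0
        symm
        simpa using hnn
    | false =>
      have hz : ∀ H ∈ B (e j).1, y (H, true) = 0 := fun H hH =>
        hvanish y ε h2 (e j).1 H true ((hBmem _ _).mp hH) (by rw [hε]; simp)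
      have hval : q y j = -∑ H ∈ B (e j).1, y (H, false) := by
        rw [hq, ← Finset.sum_neg_distrib]
        exact Finset.sum_congr rfl fun H hH => by rw [hz H hH]; ring
      have hnp : q y j ≤ 0 := by
        rw [hval, neg_nonpos]
        exact Finset.sum_nonneg fun H _ => h1 _
      constructor
      · rw [abs_of_nonpos hnp, hval, neg_neg]
        exact Finset.sum_congr rfl fun H hH => by rw [hz H hH]; ring
      · intro h0
        have : q y j < 0 := lt_of_le_of_ne hnp h0
        symm
        simpa using not_le.mpr this
  -- total mass identity
  have hsum_abs : ∀ (y : (L × Bool) → ℝ) (ε : Fin r → Bool), (∀ p, 0 ≤ y p) →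
      (∀ p, y p ≠ 0 → p ∈ MF ε) →
      ∑ j : Fin k, |q y j| = ∑ p : L × Bool, y p := by
    intro y ε h1 h2
    have step1 : ∑ j : Fin k, |q y j|
        = ∑ j : Fin k, ∑ H ∈ B (e j).1, (y (H, true) + y (H, false)) :=
      Finset.sum_congr rfl fun j _ => (hqval y ε h1 h2 j).1
    have step2 : ∑ j : Fin k, ∑ H ∈ B (e j).1, (y (H, true) + y (H, false))
        = ∑ i : {i : Fin r // (C i).Nonempty}, ∑ H ∈ B i.1, (y (H, true) + y (H, false)) :=
      Equiv.sum_comp e (fun i => ∑ H ∈ B i.1, (y (H, true) + y (H, false)))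
    have step3 : ∑ i : {i : Fin r // (C i).Nonempty}, ∑ H ∈ B i.1, (y (H, true) + y (H, false))
        = ∑ i ∈ Finset.univ.filter (fun i : Fin r => (C i).Nonempty),
            ∑ H ∈ B i, (y (H, true) + y (H, false)) := by
      exact (Finset.sum_subtype (Finset.univ.filter fun i : Fin r => (C i).Nonempty)
        (fun i => by simp) (fun i => ∑ H ∈ B i, (y (H, true) + y (H, false)))).symm
    have step4 : ∑ i ∈ Finset.univ.filter (fun i : Fin r => (C i).Nonempty),
            ∑ H ∈ B i, (y (H, true) + y (H, false))
        = ∑ i : Fin r, ∑ H ∈ B i, (y (H, true) + y (H, false)) := by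
      apply Finset.sum_filter_of_ne
      intro i _ hne
      by_contra hCne
      apply hne
      have hBi : B i = ∅ := by
        rw [hBdef]
        simp only [Set.toFinset_eq_empty]
        exact Set.not_nonempty_iff_eq_empty.mp hCne
      rw [hBi, Finset.sum_empty]
    have hdisjB : ((Finset.univ : Finset (Fin r)) : Set (Fin r)).PairwiseDisjoint B := by
      intro i _ j _ hij
      refine Finset.disjoint_left.mpr ?_
      intro H hHi hHj
      exact hij (hdisj i j H ((hBmem _ _).mp hHi) ((hBmem _ _).mp hHj))
    have step5 : ∑ i : Fin r, ∑ H ∈ B i, (y (H, true) + y (H, false))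
        = ∑ H ∈ Finset.univ.biUnion B, (y (H, true) + y (H, false)) :=
      (Finset.sum_biUnion hdisjB).symm
    have step6 : ∑ H ∈ Finset.univ.biUnion B, (y (H, true) + y (H, false))
        = ∑ p ∈ (Finset.univ.biUnion B) ×ˢ (Finset.univ : Finset Bool), y p := by
      rw [Finset.sum_product]
      exact Finset.sum_congr rfl fun H _ => by rw [Fintype.sum_bool]
    have step7 : ∑ p ∈ (Finset.univ.biUnion B) ×ˢ (Finset.univ : Finset Bool), y p
        = ∑ p : L × Bool, y p := by
      apply Finset.sum_subset (Finset.subset_univ _)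
      intro p _ hp
      by_contra h0
      obtain ⟨i, hCi, -⟩ := h2 p h0
      apply hp
      rw [Finset.mem_product]
      refine ⟨Finset.mem_biUnion.mpr ⟨i, Finset.mem_univ i, (hBmem _ _).mpr hCi⟩, Finset.mem_univ _⟩
    rw [step1, step2, step3, step4, step5, step6, step7]
  -- sM evaluations
  have hsM_eval : ∀ (t : Fin k → ℝ) (j : Fin k),
      sM t (Hc (e j), true) = max (t j) 0 ∧ sM t (Hc (e j), false) = max (-(t j)) 0 := by
    intro t j
    constructor
    · simp only [hsM]
      rw [Finset.sum_eq_single_of_mem j (Finset.mem_univ j)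
        (fun j' _ hne => by
          rw [if_neg (fun h : Hc (e j) = Hc (e j') => hne (hHcinj j' j h.symm))])]
      simp
    · simp only [hsM]
      rw [Finset.sum_eq_single_of_mem j (Finset.mem_univ j)
        (fun j' _ hne => by
          rw [if_neg (fun h : Hc (e j) = Hc (e j') => hne (hHcinj j' j h.symm))])]
      simp
  have hsM_zero : ∀ (t : Fin k → ℝ) (H : L) (b : Bool),
      (∀ j, H ≠ Hc (e j)) → sM t (H, b) = 0 := by
    intro t H b hne
    simp only [hsM]
    exact Finset.sum_eq_zero fun j _ => by rw [if_neg (hne j)]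
  have hsM_nonneg : ∀ t p, 0 ≤ sM t p := by
    intro t p
    simp only [hsM]
    refine Finset.sum_nonneg fun j _ => ?_
    split_ifs <;> simp [le_max_right]
  have hsM_sum : ∀ t : Fin k → ℝ, ∑ p : L × Bool, sM t p = ∑ j : Fin k, |t j| := by
    intro t
    simp only [hsM]
    rw [Fintype.sum_prod_type]
    have inner : ∀ H : L,
        (∑ b : Bool, ∑ j : Fin k, if H = Hc (e j) then
          (if b = true then max (t j) 0 else max (-(t j)) 0) else 0)
        = ∑ j : Fin k, (if H = Hc (e j) then |t j| else 0) := by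
      intro H
      rw [Fintype.sum_bool]
      rw [← Finset.sum_add_distrib]
      refine Finset.sum_congr rfl fun j _ => ?_
      by_cases h : H = Hc (e j)
      · simp only [if_pos h]
        simpa using habs (t j)
      · simp [h]
    calc (∑ H : L, ∑ b : Bool, ∑ j : Fin k, if (H, b).1 = Hc (e j) then
          (if (H, b).2 = true then max (t j) 0 else max (-(t j)) 0) else 0)
        = ∑ H : L, ∑ j : Fin k, (if H = Hc (e j) then |t j| else 0) :=
          Finset.sum_congr rfl fun H _ => inner H
      _ = ∑ j : Fin k, ∑ H : L, (if H = Hc (e j) then |t j| else 0) := Finset.sum_comm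
      _ = ∑ j : Fin k, |t j| := by
          refine Finset.sum_congr rfl fun j _ => ?_
          rw [Finset.sum_ite_eq' Finset.univ (Hc (e j)) (fun _ => |t j|)]
          simp
  -- support of sM
  have hsupp_s : ∀ (t : Fin k → ℝ) (p : L × Bool), sM t p ≠ 0 → p ∈ MF (εt t) := by
    intro t p h0
    have hex : ∃ j : Fin k, (if p.1 = Hc (e j) then
        (if p.2 = true then max (t j) 0 else max (-(t j)) 0) else 0) ≠ 0 := by
      by_contra hall
      push_neg at hall
      exact h0 (by simp only [hsM]; exact Finset.sum_eq_zero fun j _ => hall j)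
    obtain ⟨j, hj⟩ := hex
    have hp1 : p.1 = Hc (e j) := by
      by_contra h
      rw [if_neg h] at hj
      exact hj rfl
    rw [if_pos hp1] at hj
    have hrwε : εt t (e j).1 = decide (0 ≤ t j) := by
      simp only [hεt]
      have hI := (e j).2
      rw [dif_pos hI]
      congr 1
      have : (⟨(e j).1, hI⟩ : {i : Fin r // (C i).Nonempty}) = e j := Subtype.ext rfl
      rw [this, Equiv.symm_apply_apply]
    refine ⟨(e j).1, by rw [hp1]; exact hHc (e j), ?_⟩
    rw [hrwε]
    cases hb : p.2 with
    | true =>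
      rw [if_pos (by rw [hb]) ] at hj
      have : 0 < t j := by
        by_contra h
        push_neg at h
        exact hj (max_eq_right h)
      simp [le_of_lt this]
    | false =>
      rw [if_neg (by rw [hb]; simp)] at hj
      have : t j < 0 := by
        by_contra h
        push_neg at h
        exact hj (max_eq_right (by linarith))
      simp [not_le.mpr this]
  -- q ∘ sM = id
  have hqs : ∀ t : Fin k → ℝ, q (sM t) = t := by
    intro t
    funext j
    simp only [hq]
    have hmem : Hc (e j) ∈ B (e j).1 := (hBmem _ _).mpr (hHc (e j))
    rw [Finset.sum_eq_single_of_mem (Hc (e j)) hmem (fun H hH hne => by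
      have hall : ∀ j', H ≠ Hc (e j') := by
        intro j' h'
        have h1 : H ∈ C (e j').1 := by rw [h']; exact hHc (e j')
        have h2 : H ∈ C (e j).1 := (hBmem _ _).mp hH
        have h3 : (e j').1 = (e j).1 := hdisj _ _ H h1 h2
        have h4 : e j' = e j := Subtype.ext h3
        exact hne (by rw [h', h4])
      rw [hsM_zero t H true hall, hsM_zero t H false hall]
      ring)]
    rw [(hsM_eval t j).1, (hsM_eval t j).2, hdiffmax]
  -- key compatibility lemma
  have hkey : ∀ (y : (L × Bool) → ℝ) (ε : Fin r → Bool), (∀ p, 0 ≤ y p) →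
      (∀ p, y p ≠ 0 → p ∈ MF ε) → ∀ p, y p ≠ 0 → p ∈ MF (εt (q y)) := by
    intro y ε h1 h2 p hp
    obtain ⟨H0, b0⟩ := p
    obtain ⟨i, hCi, hb⟩ := h2 _ hp
    have hI : (C i).Nonempty := ⟨H0, hCi⟩
    set j : Fin k := e.symm ⟨i, hI⟩ with hjdef
    have hej : e j = ⟨i, hI⟩ := e.apply_symm_apply _
    have hej1 : (e j).1 = i := by rw [hej]
    have hyp : 0 < y (H0, b0) := lt_of_le_of_ne (h1 _) (Ne.symm hp)
    have hple : y (H0, b0) ≤ y (H0, true) + y (H0, false) := by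
      cases b0
      · have := h1 (H0, true); linarith
      · have := h1 (H0, false); linarith
    have hmass : 0 < ∑ H ∈ B (e j).1, (y (H, true) + y (H, false)) := by
      have hmem : H0 ∈ B (e j).1 := by rw [hej1]; exact (hBmem _ _).mpr hCi
      have hle := Finset.single_le_sum
        (f := fun H => y (H, true) + y (H, false))
        (fun H _ => add_nonneg (h1 _) (h1 _)) hmem
      linarith
    have habsq := (hqval y ε h1 h2 j).1
    have hq0 : q y j ≠ 0 := by
      intro h0
      rw [h0, abs_zero] at habsq
      linarith [habsq ▸ hmass]
    have hsign : ε (e j).1 = decide (0 ≤ q y j) := (hqval y ε h1 h2 j).2 hq0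
    refine ⟨i, hCi, ?_⟩
    have hεti : εt (q y) i = decide (0 ≤ q y j) := by
      simp only [hεt]
      rw [dif_pos hI]
    rw [hb, hεti, ← hsign, hej1]
  -- convex combinations stay in X
  have hconvex : ∀ (u : ℝ) (y z : (L × Bool) → ℝ) (ε : Fin r → Bool), 0 ≤ u → u ≤ 1 →
      (∀ p, 0 ≤ y p) → (∑ p, y p) = 1 → (∀ p, 0 ≤ z p) → (∑ p, z p) = 1 →
      (∀ p, y p ≠ 0 → p ∈ MF ε) → (∀ p, z p ≠ 0 → p ∈ MF ε) →
      (fun p => (1 - u) * y p + u * z p) ∈ X := by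
    intro u y z ε hu0 hu1 hy1 hy2 hz1 hz2 hy3 hz3
    apply hXmem
    · intro p
      have := hy1 p
      have := hz1 p
      have h1u : 0 ≤ 1 - u := by linarith
      positivity
    · rw [Finset.sum_add_distrib, ← Finset.mul_sum, ← Finset.mul_sum, hy2, hz2]
      ring
    · refine ⟨ε, fun p hp => ?_⟩
      by_cases hyp : y p = 0
      · by_cases hzp : z p = 0
        · exact absurd (by rw [hyp, hzp]; ring) hp
        · exact hz3 p hzp
      · exact hy3 p hyp
  -- the target of the projection map: the ℓ¹ sphere
  set T : Set (EuclideanSpace ℝ (Fin k)) := {t | ∑ j : Fin k, |t j| = 1} with hT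
  have hPmem : ∀ x : ↥X, (WithLp.equiv 2 (Fin k → ℝ)).symm (q x.1) ∈ T := by
    intro x
    obtain ⟨h1, h2, ε, h3⟩ := hXelim x.1 x.2
    show ∑ j : Fin k, |q x.1 j| = 1
    rw [hsum_abs x.1 ε h1 h3]
    exact h2
  have hPcont : Continuous fun x : ↥X => (WithLp.equiv 2 (Fin k → ℝ)).symm (q x.1) := by
    apply (PiLp.continuous_toLp 2 (fun _ : Fin k => ℝ)).comp
    apply continuous_pi
    intro j
    simp only [hq]
    apply continuous_finset_sum
    intro H _
    exact ((continuous_apply ((H, true) : L × Bool)).comp continuous_subtype_val).sub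
      ((continuous_apply ((H, false) : L × Bool)).comp continuous_subtype_val)
  set Pmap : C(↥X, ↥T) :=
    ⟨fun x => ⟨(WithLp.equiv 2 (Fin k → ℝ)).symm (q x.1), hPmem x⟩, hPcont.subtype_mk _⟩
    with hPmap
  have hSmem : ∀ t : ↥T, sM (WithLp.equiv 2 (Fin k → ℝ) t.1) ∈ X := by
    intro t
    refine hXmem _ (hsM_nonneg _) ?_ ⟨εt _, hsupp_s _⟩
    rw [hsM_sum]
    exact t.2
  have hScont : Continuous fun t : ↥T => sM (WithLp.equiv 2 (Fin k → ℝ) t.1) := by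
    apply continuous_pi
    intro p
    simp only [hsM]
    apply continuous_finset_sum
    intro j _
    have hc : Continuous fun t : ↥T => (WithLp.equiv 2 (Fin k → ℝ) t.1) j :=
      (continuous_apply j).comp
        ((PiLp.continuous_ofLp 2 (fun _ : Fin k => ℝ)).comp continuous_subtype_val)
    by_cases h1 : p.1 = Hc (e j)
    · by_cases h2 : p.2 = true
      · simp only [if_pos h1, if_pos h2]
        exact hc.max continuous_const
      · simp only [if_pos h1, if_neg h2]
        exact hc.neg.max continuous_const
    · simp only [if_neg h1]
      exact continuous_const
  set Smap : C(↥T, ↥X) :=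
    ⟨fun t => ⟨sM (WithLp.equiv 2 (Fin k → ℝ) t.1), hSmem t⟩, hScont.subtype_mk _⟩
    with hSmap
  have hPS : Pmap.comp Smap = ContinuousMap.id ↥T := by
    apply ContinuousMap.ext
    intro t
    apply Subtype.ext
    show (WithLp.equiv 2 (Fin k → ℝ)).symm (q (sM (WithLp.equiv 2 (Fin k → ℝ) t.1))) = t.1
    rw [hqs]
    rfl
  have hHmem : ∀ (u : ↥unitInterval) (x : ↥X),
      (fun p => (1 - (u.1 : ℝ)) * (Smap (Pmap x)).1 p + (u.1 : ℝ) * x.1 p) ∈ X := by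
    intro u x
    obtain ⟨h1, h2, ε, h3⟩ := hXelim x.1 x.2
    obtain ⟨g1, g2, -⟩ := hXelim _ (Smap (Pmap x)).2
    refine hconvex u.1 _ _ (εt (q x.1)) u.2.1 u.2.2 g1 g2 h1 h2 ?_ (hkey x.1 ε h1 h3)
    intro p hp
    exact hsupp_s (WithLp.equiv 2 (Fin k → ℝ) (Pmap x).1) p hp
  have hHcont : Continuous fun ux : ↥unitInterval × ↥X =>
      (fun p => (1 - (ux.1.1 : ℝ)) * (Smap (Pmap ux.2)).1 p + (ux.1.1 : ℝ) * ux.2.1 p :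
        (L × Bool) → ℝ) := by
    apply continuous_pi
    intro p
    have hu : Continuous fun ux : ↥unitInterval × ↥X => (ux.1.1 : ℝ) :=
      continuous_subtype_val.comp continuous_fst
    have hs : Continuous fun ux : ↥unitInterval × ↥X => (Smap (Pmap ux.2)).1 p :=
      (continuous_apply p).comp (continuous_subtype_val.comp
        (((Smap.comp Pmap).continuous).comp continuous_snd))
    have hx : Continuous fun ux : ↥unitInterval × ↥X => ux.2.1 p :=
      (continuous_apply p).comp (continuous_subtype_val.comp continuous_snd)
    exact ((continuous_const.sub hu).mul hs).add (hu.mul hx)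
  have hHom : (Smap.comp Pmap).Homotopic (ContinuousMap.id ↥X) := by
    refine ⟨⟨⟨fun ux => ⟨_, hHmem ux.1 ux.2⟩, hHcont.subtype_mk _⟩, ?_, ?_⟩⟩
    · intro x
      apply Subtype.ext
      funext p
      show (1 - ((0 : ↥unitInterval) : ℝ)) * (Smap (Pmap x)).1 p
        + ((0 : ↥unitInterval) : ℝ) * x.1 p = (Smap (Pmap x)).1 p
      norm_num
    · intro x
      apply Subtype.ext
      funext p
      show (1 - ((1 : ↥unitInterval) : ℝ)) * (Smap (Pmap x)).1 p
        + ((1 : ↥unitInterval) : ℝ) * x.1 p = x.1 p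
      norm_num
  have E1 : ContinuousMap.HomotopyEquiv ↥X ↥T :=
    { toFun := Pmap, invFun := Smap, left_inv := hHom,
      right_inv := by rw [hPS] }
  -- the ℓ¹ sphere is homeomorphic to the euclidean sphere
  have hTne : ∀ t : ↥T, t.1 ≠ 0 := by
    intro t h0
    have ht : ∑ j : Fin k, |t.1 j| = 1 := t.2
    rw [h0] at ht
    have hz : ∀ j : Fin k, (0 : EuclideanSpace ℝ (Fin k)) j = 0 := fun j => rfl
    rw [Finset.sum_congr rfl (fun j _ => by rw [hz j, abs_zero]), Finset.sum_const_zero] at ht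
    norm_num at ht
  have hfmem : ∀ t : ↥T, ‖t.1‖⁻¹ • t.1 ∈ stdSphere k := by
    intro t
    have hn : ‖t.1‖ ≠ 0 := norm_ne_zero_iff.mpr (hTne t)
    show ‖t.1‖⁻¹ • t.1 ∈ Metric.sphere 0 1
    rw [mem_sphere_zero_iff_norm, norm_smul, norm_inv, norm_norm, inv_mul_cancel₀ hn]
  have hgc : ∀ y : ↥(stdSphere k), 0 < ∑ j : Fin k, |y.1 j| := by
    intro y
    have hy : ‖y.1‖ = 1 := mem_sphere_zero_iff_norm.mp y.2
    have hy0 : y.1 ≠ 0 := by intro h; rw [h, norm_zero] at hy; norm_num at hy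
    have hj : ∃ j, y.1 j ≠ 0 := by
      by_contra hall
      push_neg at hall
      exact hy0 (by ext j; exact hall j)
    obtain ⟨j, hj⟩ := hj
    exact Finset.sum_pos' (fun j _ => abs_nonneg _) ⟨j, Finset.mem_univ j, abs_pos.mpr hj⟩
  have hsmul_app : ∀ (c : ℝ) (y : EuclideanSpace ℝ (Fin k)) (j : Fin k),
      (c • y) j = c * y j := fun c y j => rfl
  have hgmem : ∀ y : ↥(stdSphere k), (∑ j : Fin k, |y.1 j|)⁻¹ • y.1 ∈ T := by
    intro y
    have hc := hgc y
    show ∑ j : Fin k, |((∑ j' : Fin k, |y.1 j'|)⁻¹ • y.1) j| = 1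
    calc ∑ j : Fin k, |((∑ j' : Fin k, |y.1 j'|)⁻¹ • y.1) j|
        = ∑ j : Fin k, (∑ j' : Fin k, |y.1 j'|)⁻¹ * |y.1 j| := by
          refine Finset.sum_congr rfl fun j _ => ?_
          rw [hsmul_app, abs_mul, abs_inv, abs_of_pos hc]
      _ = (∑ j' : Fin k, |y.1 j'|)⁻¹ * ∑ j : Fin k, |y.1 j| := by rw [Finset.mul_sum]
      _ = 1 := inv_mul_cancel₀ hc.ne'
  set fT : ↥T → ↥(stdSphere k) := fun t => ⟨‖t.1‖⁻¹ • t.1, hfmem t⟩ with hfT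
  set gT : ↥(stdSphere k) → ↥T := fun y => ⟨(∑ j : Fin k, |y.1 j|)⁻¹ • y.1, hgmem y⟩ with hgT
  have hgf : ∀ t, gT (fT t) = t := by
    intro t
    apply Subtype.ext
    have hn : ‖t.1‖ ≠ 0 := norm_ne_zero_iff.mpr (hTne t)
    have hsum : ∑ j : Fin k, |(‖t.1‖⁻¹ • t.1) j| = ‖t.1‖⁻¹ := by
      calc ∑ j : Fin k, |(‖t.1‖⁻¹ • t.1) j|
          = ∑ j : Fin k, ‖t.1‖⁻¹ * |t.1 j| := by
            refine Finset.sum_congr rfl fun j _ => ?_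
            rw [hsmul_app, abs_mul, abs_inv, abs_norm]
        _ = ‖t.1‖⁻¹ * ∑ j : Fin k, |t.1 j| := by rw [Finset.mul_sum]
        _ = ‖t.1‖⁻¹ := by rw [t.2]; ring
    show (∑ j : Fin k, |(‖t.1‖⁻¹ • t.1) j|)⁻¹ • (‖t.1‖⁻¹ • t.1) = t.1
    rw [hsum, smul_smul, inv_inv, mul_inv_cancel₀ hn, one_smul]
  have hfg : ∀ y, fT (gT y) = y := by
    intro y
    apply Subtype.ext
    have hc := hgc y
    have hy : ‖y.1‖ = 1 := mem_sphere_zero_iff_norm.mp y.2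
    have hnorm : ‖(∑ j : Fin k, |y.1 j|)⁻¹ • y.1‖ = (∑ j : Fin k, |y.1 j|)⁻¹ := by
      rw [norm_smul, hy, mul_one, norm_inv, Real.norm_eq_abs, abs_of_pos hc]
    show ‖(∑ j : Fin k, |y.1 j|)⁻¹ • y.1‖⁻¹ • ((∑ j : Fin k, |y.1 j|)⁻¹ • y.1) = y.1
    rw [hnorm, smul_smul, inv_inv, mul_inv_cancel₀ hc.ne', one_smul]
  have hfTcont : Continuous fT := by
    refine Continuous.subtype_mk ?_ _
    exact ((continuous_norm.comp continuous_subtype_val).inv₀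
      (fun t => norm_ne_zero_iff.mpr (hTne t))).smul continuous_subtype_val
  have hgTcont : Continuous gT := by
    refine Continuous.subtype_mk ?_ _
    have hsc : Continuous fun y : ↥(stdSphere k) => ∑ j : Fin k, |y.1 j| := by
      apply continuous_finset_sum
      intro j _
      exact continuous_abs.comp ((continuous_apply j).comp
        ((PiLp.continuous_ofLp 2 (fun _ : Fin k => ℝ)).comp continuous_subtype_val))
    exact (hsc.inv₀ (fun y => (hgc y).ne')).smul continuous_subtype_val
  have homeoT : ↥T ≃ₜ ↥(stdSphere k) :=
    { toFun := fT, invFun := gT, left_inv := hgf, right_inv := hfg,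
      continuous_toFun := hfTcont, continuous_invFun := hgTcont }
  exact ⟨E1.trans homeoT.toHomotopyEquiv⟩

/-- The geometric realization of `S_G` is homotopy equivalent to the sphere
`S^{corank(G) - 1}`; in particular, `S_⊥ ≃ S^{r-1}`. -/
theorem flagComplex_homotopyEquiv_sphere {L : Type*} [Lattice L] [BoundedOrder L] [Fintype L]
    {rk : L → ℕ} (hL : IsGeometricLattice L rk) {r : ℕ} (hr : rk ⊤ = r)
    (F : Fin (r + 1) → L) (hF : IsCompleteFlag F)
    (A : Fin r → Set L)
    (hA : ∀ i : Fin r, A i = coatomsAbove (F i.castSucc) \ coatomsAbove (F i.succ))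
    (G : L) :
    Nonempty (ContinuousMap.HomotopyEquiv
      (realization (flagComplex A G)) (stdSphere (r - rk G))) := by
  have hdisj := flag_block_disj F hF A hA G
  have hcard := flag_block_count hL hr F hF A hA G
  exact top_main (fun i => coatomsAbove G ∩ A i) hdisj hcard
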